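/- Let κ be an infinite cardinal, X a meet-semilattice with |X| ≤ κ, F a proper filter on κ, and Π a collection of large partitions of κ that is polyconsistent with F. Let f : X → P(κ) be monotone with f(x) ∈ F for all x ∈ X, and let P ∈ Π. Then there exists g : X → P(κ) such that: g(x) ⊆ f(x) for all x; g(x ⊓ y) = g(x) ∩ g(y) for all x, y ∈ X; the filter F' generated by F ∪ {g(x) : x ∈ X} is proper; and Π \ {P} is polyconsistent with F'. -/

import Mathlib

open Cardinal

universe u

/-- A partition of `α`: a set of pairwise disjoint nonempty subsets covering `α`. -/
def IsPartition {α : Type u} (P : Set (Set α)) : Prop :=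
  (∀ C ∈ P, C.Nonempty) ∧ (∀ C ∈ P, ∀ D ∈ P, C ≠ D → C ∩ D = ∅) ∧ ⋃₀ P = Set.univ

/-- A polycell of a collection `Ps` of partitions: an intersection of one cell from
each of finitely many (at least one) distinct partitions in `Ps`. -/
def IsPolycell {α : Type u} (Ps : Set (Set (Set α))) (C : Set α) : Prop :=
  ∃ t : Finset (Set (Set α)), (t : Set (Set (Set α))) ⊆ Ps ∧ t.Nonempty ∧
    ∃ c : Set (Set α) → Set α, (∀ P ∈ t, c P ∈ P) ∧ C = ⋂ P ∈ t, c P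

/-- `con F`: the sets meeting every member of the filter `F`. -/
def conF {α : Type u} (F : Filter α) : Set (Set α) :=
  {y : Set α | ∀ x ∈ F, (x ∩ y).Nonempty}

/-- `Ps` is polyconsistent with `F` if every polycell of `Ps` is consistent with `F`. -/
def Polyconsistent {α : Type u} (Ps : Set (Set (Set α))) (F : Filter α) : Prop :=
  ∀ C : Set α, IsPolycell Ps C → C ∈ conF F

/-- Given a meet-semilattice `X` with `|X| ≤ κ`, a proper filter `F`
on `κ`, a collection `Ps` of large partitions of `κ` polyconsistent with `F`, a
monotone `f : X → F`, and `P ∈ Ps`, there is a multiplicative `g ≤ f` such that the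
filter generated by `F ∪ ran g` is proper and `Ps \ {P}` is polyconsistent with it. -/
theorem stmt_9 (κ : Cardinal.{u}) (hκ : Cardinal.aleph0 ≤ κ)
    (X : Type u) [SemilatticeInf X] (hX : #X ≤ κ)
    (F : Filter κ.out) (hF : F.NeBot)
    (Ps : Set (Set (Set κ.out)))
    (hPs : ∀ P ∈ Ps, IsPartition P ∧ #P = κ)
    (hpoly : Polyconsistent Ps F)
    (f : X → Set κ.out) (hfmono : Monotone f) (hfF : ∀ x : X, f x ∈ F)
    (P : Set (Set κ.out)) (hP : P ∈ Ps) :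
    ∃ g : X → Set κ.out,
      (∀ x : X, g x ⊆ f x) ∧
      (∀ x y : X, g (x ⊓ y) = g x ∩ g y) ∧
      (Filter.generate (F.sets ∪ Set.range g)).NeBot ∧
      Polyconsistent (Ps \ {P}) (Filter.generate (F.sets ∪ Set.range g)) := by
  classical
  obtain ⟨hPpart, hPcard⟩ := hPs P hP
  obtain ⟨e⟩ := (Cardinal.le_def X ↥P).mp (hX.trans_eq hPcard.symm)
  set E : X → Set κ.out := fun x => ((e x : ↥P) : Set κ.out) with hE
  have hEmem : ∀ x, E x ∈ P := fun x => (e x).2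
  have hEinj : Function.Injective E := Subtype.val_injective.comp e.injective
  have hEdisj : ∀ x y : X, x ≠ y → E x ∩ E y = ∅ := fun x y hxy =>
    hPpart.2.1 _ (hEmem x) _ (hEmem y) (fun h => hxy (hEinj h))
  set g : X → Set κ.out := fun x => ⋃ y ∈ Set.Iic x, f y ∩ E y with hg
  have hgsub : ∀ x, g x ⊆ f x := by
    intro x a ha
    simp only [hg, Set.mem_iUnion, Set.mem_Iic, exists_prop] at ha
    obtain ⟨y, hy, hay, -⟩ := ha
    exact hfmono hy hay
  have hgself : ∀ x, f x ∩ E x ⊆ g x := by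
    intro x a ha
    simp only [hg, Set.mem_iUnion, Set.mem_Iic, exists_prop]
    exact ⟨x, le_rfl, ha⟩
  have hmult : ∀ x y, g (x ⊓ y) = g x ∩ g y := by
    intro x y
    ext a
    simp only [hg, Set.mem_iUnion, Set.mem_inter_iff, Set.mem_Iic, exists_prop]
    constructor
    · rintro ⟨z, hz, haz⟩
      exact ⟨⟨z, hz.trans inf_le_left, haz⟩, ⟨z, hz.trans inf_le_right, haz⟩⟩
    · rintro ⟨⟨z, hz, hazf, hazE⟩, ⟨w, hw, hawf, hawE⟩⟩
      have hzw : z = w := by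
        by_contra hzw
        have hd := hEdisj z w hzw
        have : a ∈ E z ∩ E w := ⟨hazE, hawE⟩
        rw [hd] at this
        exact this
      subst hzw
      exact ⟨z, le_inf hz hw, hazf, hazE⟩
  -- lower bounds for finite sets of g-values
  have hlow : ∀ u : Set (Set κ.out), u.Finite → u ⊆ Set.range g → u.Nonempty →
      ∃ x : X, g x ⊆ ⋂₀ u := by
    intro u hu
    refine Set.Finite.induction_on u hu (fun _ h => absurd h Set.not_nonempty_empty) ?_
    intro s u' hsn hu' IH hsub _
    · skip
      obtain ⟨x₀, hx₀⟩ := hsub (Set.mem_insert s u')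
      rcases u'.eq_empty_or_nonempty with rfl | hne
      · exact ⟨x₀, by simp [hx₀]⟩
      · obtain ⟨x, hx⟩ := IH (fun a ha => hsub (Set.mem_insert_of_mem _ ha)) hne
        refine ⟨x₀ ⊓ x, ?_⟩
        rw [Set.sInter_insert, hmult]
        exact Set.inter_subset_inter (hx₀ ▸ Set.Subset.rfl) hx
  -- decomposition of members of the generated filter
  have key : ∀ S ∈ Filter.generate (F.sets ∪ Set.range g), ∃ A ∈ F,
      A ⊆ S ∨ ∃ x : X, A ∩ (f x ∩ E x) ⊆ S := by
    intro S hS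
    obtain ⟨t, hts, htfin, htS⟩ := Filter.mem_generate_iff.mp hS
    have hA : ⋂₀ (t ∩ F.sets) ∈ F :=
      (Filter.sInter_mem (htfin.subset Set.inter_subset_left)).mpr fun U hU => hU.2
    refine ⟨⋂₀ (t ∩ F.sets), hA, ?_⟩
    have hsplit : ⋂₀ (t ∩ F.sets) ∩ ⋂₀ (t ∩ Set.range g) ⊆ ⋂₀ t := by
      intro a ha U hU
      rcases hts hU with h | h
      · exact ha.1 U ⟨hU, h⟩
      · exact ha.2 U ⟨hU, h⟩
    rcases (t ∩ Set.range g).eq_empty_or_nonempty with hemp | hne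
    · left
      refine (fun a ha => htS (hsplit ⟨ha, ?_⟩))
      simp [hemp]
    · right
      obtain ⟨x, hx⟩ := hlow _ (htfin.subset Set.inter_subset_left) Set.inter_subset_right hne
      exact ⟨x, fun a ha => htS (hsplit ⟨ha.1, hx (hgself x ha.2)⟩)⟩
  have hPnotmem : ∀ t : Finset (Set (Set κ.out)),
      (t : Set (Set (Set κ.out))) ⊆ Ps \ {P} → P ∉ t := by
    intro t ht hPt
    exact (ht hPt).2 rfl
  have hEcell : ∀ x, IsPolycell Ps (E x) := by
    intro x
    refine ⟨{P}, by simpa using hP, Finset.singleton_nonempty _, fun _ => E x, ?_, by simp⟩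
    intro Q hQ
    rw [Finset.mem_singleton] at hQ
    subst hQ
    exact hEmem x
  have hcellext : ∀ (x : X) (C : Set κ.out), IsPolycell (Ps \ {P}) C →
      IsPolycell Ps (E x ∩ C) := by
    rintro x C ⟨t, hts, htne, c, hc, rfl⟩
    have hPt : P ∉ t := hPnotmem t hts
    refine ⟨insert P t, ?_, ⟨P, Finset.mem_insert_self _ _⟩,
      Function.update c P (E x), ?_, ?_⟩
    · intro Q hQ
      rcases Finset.mem_insert.mp hQ with rfl | hQ
      · exact hP
      · exact (hts hQ).1
    · intro Q hQ
      rcases Finset.mem_insert.mp hQ with rfl | hQ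
      · simpa using hEmem x
      · rw [Function.update_of_ne (fun h : Q = P => hPt (by rw [← h]; exact hQ))]
        exact hc Q hQ
    · rw [Finset.set_biInter_insert, Function.update_self]
      congr 1
      exact Set.iInter₂_congr fun Q hQ =>
        (Function.update_of_ne (fun h : Q = P => hPt (by rw [← h]; exact hQ)) _ _).symm
  have hmonoPs : ∀ C : Set κ.out, IsPolycell (Ps \ {P}) C → IsPolycell Ps C := by
    rintro C ⟨t, hts, htne, c, hc, rfl⟩
    exact ⟨t, fun Q hQ => (hts hQ).1, htne, c, hc, rfl⟩
  refine ⟨g, hgsub, hmult, ?_, ?_⟩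
  · rw [← Filter.forall_mem_nonempty_iff_neBot]
    intro S hS
    obtain ⟨A, hA, hcase⟩ := key S hS
    rcases hcase with h | ⟨x, h⟩
    · exact (Filter.nonempty_of_mem hA).mono h
    · have := hpoly (E x) (hEcell x) (A ∩ f x) (F.inter_mem hA (hfF x))
      refine this.mono ?_
      intro a ⟨⟨ha1, ha2⟩, ha3⟩
      exact h ⟨ha1, ha2, ha3⟩
  · intro C hC S hS
    obtain ⟨A, hA, hcase⟩ := key S hS
    rcases hcase with h | ⟨x, h⟩
    · exact (hpoly C (hmonoPs C hC) A hA).mono (Set.inter_subset_inter_left C h)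
    · have := hpoly (E x ∩ C) (hcellext x C hC) (A ∩ f x) (F.inter_mem hA (hfF x))
      refine this.mono ?_
      rintro a ⟨⟨ha1, ha2⟩, ha3, ha4⟩
      exact ⟨h ⟨ha1, ha2, ha3⟩, ha4⟩
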